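/- arXiv:0901.1451 — 2 statements merged into one kernel-verified Lean document; each statement's English description precedes it below -/
import Mathlib

section
/- Suppose v is a looped vertex of the marked graph G (v itself may be marked or unmarked) and no neighbor of v is marked. Then A·[G] = B·[G − {v,v}] + (A² − B²)·[G^v − v], where G − {v,v} is obtained from G by removing the loop at v. (Equivalently, [G] = A^{-1}B·[G − {v,v}] + (A − A^{-1}B²)·[G^v − v].) -/
open MvPolynomial

/-- A marked graph: a finite vertex set, an adjacency matrix over GF(2)
(the diagonal entry at `v` is 1 iff `v` carries a loop; for `v ≠ w` the `(v,w)` entry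
is 1 iff `v` and `w` are adjacent), a designated set of marked vertices, and a number
of free loops. -/
structure MarkedGraph (V : Type) [Fintype V] [DecidableEq V] where
  adj : Matrix V V (ZMod 2)
  marked : V → Bool
  freeLoops : ℕ

namespace MarkedGraph

variable {V : Type} [Fintype V] [DecidableEq V]

/-- GF(2)-nullity of a square matrix: the dimension of its kernel. -/
noncomputable def nullity {ι : Type*} [Fintype ι] (M : Matrix ι ι (ZMod 2)) : ℕ :=
  Module.finrank (ZMod 2) (LinearMap.ker M.mulVecLin)

/-- The diagonal matrix `Δ_T` over GF(2) whose diagonal entry at `v` is 1 iff `v ∈ T`. -/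
def delta (T : Finset V) : Matrix V V (ZMod 2) :=
  Matrix.diagonal fun v => if v ∈ T then 1 else 0

/-- The vertices kept in the submatrix `𝒜(G)_T`: delete each marked vertex whose
diagonal entry in `𝒜(G) + Δ_T` is 0. -/
def keep (G : MarkedGraph V) (T : Finset V) : Finset V :=
  Finset.univ.filter fun v => ¬ (G.marked v = true ∧ (G.adj + delta T) v v = 0)

/-- The submatrix `𝒜(G)_T` of `𝒜(G) + Δ_T`. -/
def subMat (G : MarkedGraph V) (T : Finset V) :
    Matrix (G.keep T) (G.keep T) (ZMod 2) :=
  fun i j => (G.adj + delta T) i.1 j.1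

/-- The marked-graph bracket polynomial `[G] ∈ ℤ[A,B,d]`, where `A = X 0`, `B = X 1`,
`d = X 2`:  `[G] = d^φ ⬝ Σ_{T ⊆ V(G)} A^(n-|T|) B^(|T|) d^(ν(𝒜(G)_T))`. -/
noncomputable def bracket (G : MarkedGraph V) : MvPolynomial (Fin 3) ℤ :=
  X 2 ^ G.freeLoops *
    ∑ T : Finset V,
      X 0 ^ (Fintype.card V - T.card) * X 1 ^ T.card * X 2 ^ nullity (G.subMat T)

/-- `x` is a neighbor of `v` (no vertex is a neighbor of itself). -/
def nbr (G : MarkedGraph V) (v x : V) : Prop := x ≠ v ∧ G.adj v x = 1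

instance (G : MarkedGraph V) (v x : V) : Decidable (G.nbr v x) :=
  inferInstanceAs (Decidable (x ≠ v ∧ G.adj v x = 1))

/-- Delete the vertices in `s`, together with all incident edges
(marks and free loops unchanged). -/
def delete (G : MarkedGraph V) (s : Finset V) : MarkedGraph {v : V // v ∉ s} where
  adj := fun i j => G.adj i.1 j.1
  marked := fun i => G.marked i.1
  freeLoops := G.freeLoops

/-- The local complement `G^v`: toggle every entry of the adjacency matrix (diagonal
entries included) whose row and column indices are both neighbors of `v`. -/
def localComp (G : MarkedGraph V) (v : V) : MarkedGraph V :=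
  { G with adj := fun x y => if G.nbr v x ∧ G.nbr v y then G.adj x y + 1 else G.adj x y }

/-- `G - {v,v}`: remove the loop at `v` (set the diagonal entry at `v` to 0). -/
def removeLoop (G : MarkedGraph V) (v : V) : MarkedGraph V :=
  { G with adj := fun x y => if x = v ∧ y = v then 0 else G.adj x y }

/-- `G + I`: toggle all loops. -/
def addI (G : MarkedGraph V) : MarkedGraph V :=
  { G with adj := G.adj + 1 }

/-- `G⁺`: adjoin one free loop. -/
def addFreeLoop (G : MarkedGraph V) : MarkedGraph V :=
  { G with freeLoops := G.freeLoops + 1 }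

/-- The condition under which the pivot `G^{vw}` toggles the adjacency between `x`
and `y`: `x` is a neighbor of `v`, `y` is a neighbor of `w`, and either `x` is not a
neighbor of `w` or `y` is not a neighbor of `v`. -/
def pivotCond (G : MarkedGraph V) (v w x y : V) : Prop :=
  G.nbr v x ∧ G.nbr w y ∧ (¬ G.nbr w x ∨ ¬ G.nbr v y)

instance (G : MarkedGraph V) (v w x y : V) : Decidable (G.pivotCond v w x y) :=
  inferInstanceAs (Decidable (G.nbr v x ∧ G.nbr w y ∧ (¬ G.nbr w x ∨ ¬ G.nbr v y)))

/-- The pivot `G^{vw}`: toggle the adjacency between every pair of distinct vertices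
`x, y ∉ {v,w}` such that `x` is a neighbor of `v`, `y` is a neighbor of `w`, and
either `x` is not a neighbor of `w` or `y` is not a neighbor of `v`
(loops are unaffected). -/
def pivot (G : MarkedGraph V) (v w : V) : MarkedGraph V :=
  { G with adj := fun x y =>
      if x ≠ v ∧ x ≠ w ∧ y ≠ v ∧ y ≠ w ∧ x ≠ y ∧
          (G.pivotCond v w x y ∨ G.pivotCond v w y x)
      then G.adj x y + 1 else G.adj x y }

/-- Interchange the neighbors of `v` and `w` in an adjacency matrix, keeping loops
and the edge between `v` and `w` unchanged. -/
def swapAdjacencies (M : Matrix V V (ZMod 2)) (v w : V) : Matrix V V (ZMod 2) :=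
  fun x y =>
    if x = y then M x y
    else if (x = v ∧ y = w) ∨ (x = w ∧ y = v) then M x y
    else M (Equiv.swap v w x) (Equiv.swap v w y)

/-- The marked pivot `G_c^{vw}`: the pivot `G^{vw}` with the marks on `v` and `w`
toggled and the neighbors of `v` and `w` interchanged (loops, the edge between `v`
and `w`, and free loops unchanged). -/
def markedPivot (G : MarkedGraph V) (v w : V) : MarkedGraph V where
  adj := swapAdjacencies (G.pivot v w).adj v w
  marked := fun u => if u = v ∨ u = w then !(G.marked u) else G.marked u
  freeLoops := G.freeLoops

/-- The disjoint union of two marked graphs: block-diagonal adjacency matrix,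
each vertex marked as it was, free loops added. -/
def disjUnion {V₁ V₂ : Type} [Fintype V₁] [DecidableEq V₁] [Fintype V₂] [DecidableEq V₂]
    (G₁ : MarkedGraph V₁) (G₂ : MarkedGraph V₂) : MarkedGraph (V₁ ⊕ V₂) where
  adj := Matrix.fromBlocks G₁.adj 0 0 G₂.adj
  marked := Sum.elim G₁.marked G₂.marked
  freeLoops := G₁.freeLoops + G₂.freeLoops

/-- Remove the three edges `{u,v}`, `{u,w}`, `{v,w}` (all else unchanged). -/
def removeEdges3 (G : MarkedGraph V) (u v w : V) : MarkedGraph V :=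
  { G with adj := fun x y =>
      if (x = u ∧ y = v) ∨ (x = v ∧ y = u) ∨ (x = u ∧ y = w) ∨ (x = w ∧ y = u) ∨
          (x = v ∧ y = w) ∨ (x = w ∧ y = v)
      then 0 else G.adj x y }

/-- Adjoin one isolated, unmarked vertex with no incident edges; it is looped iff
`loop = true`. -/
def addIsolated (G : MarkedGraph V) (loop : Bool) : MarkedGraph (Option V) where
  adj := fun x y =>
    match x, y with
    | some a, some b => G.adj a b
    | none, none => if loop then 1 else 0
    | _, _ => 0
  marked := fun x => match x with | some a => G.marked a | none => false
  freeLoops := G.freeLoops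

/-- The number of vertices of `s` that are adjacent to `x`. -/
def countAdj (G : MarkedGraph V) (x : V) (s : Finset V) : ℕ :=
  (s.filter fun y => G.adj x y = 1).card

/-- The reduced marked-graph bracket `⟨G⟩ ∈ ℤ[A, A⁻¹]`: substitute `B ↦ A⁻¹` and
`d ↦ -A² - A⁻²` in `[G]`. -/
noncomputable def reducedBracket (G : MarkedGraph V) : LaurentPolynomial ℤ :=
  MvPolynomial.aeval
    ![LaurentPolynomial.T 1, LaurentPolynomial.T (-1),
      -LaurentPolynomial.T 2 - LaurentPolynomial.T (-2)] G.bracket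

/-- The number of looped vertices of `G`. -/
def numLoops (G : MarkedGraph V) : ℕ :=
  (Finset.univ.filter fun v => G.adj v v = 1).card

/-- The Jones polynomial `V_G = (-1)^n ⬝ q^(3n-6ℓ) ⬝ ⟨G⟩(q⁻¹)`, as a Laurent
polynomial in the formal variable `q` (representing `t^(1/4)`); substituting
`A ↦ q⁻¹` in `⟨G⟩` amounts to substituting `A ↦ q⁻¹`, `B ↦ q`, `d ↦ -q² - q⁻²`
in `[G]`. -/
noncomputable def jones (G : MarkedGraph V) : LaurentPolynomial ℤ :=
  (-1) ^ Fintype.card V *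
    LaurentPolynomial.T (3 * (Fintype.card V : ℤ) - 6 * (G.numLoops : ℤ)) *
    MvPolynomial.aeval
      ![LaurentPolynomial.T (-1), LaurentPolynomial.T 1,
        -LaurentPolynomial.T 2 - LaurentPolynomial.T (-2)] G.bracket

end MarkedGraph

namespace MarkedGraph

variable {V : Type} [Fintype V] [DecidableEq V]

lemma card_ker_aux (ι : Type*) [Fintype ι] (M : Matrix ι ι (ZMod 2)) :
    Nat.card {x : ι → ZMod 2 // M.mulVec x = 0} = 2 ^ nullity M := by
  have e : {x : ι → ZMod 2 // M.mulVec x = 0} ≃ LinearMap.ker M.mulVecLin :=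
    Equiv.subtypeEquivRight (fun x => by simp [LinearMap.mem_ker])
  rw [Nat.card_congr e]
  haveI : Fintype (LinearMap.ker M.mulVecLin) := Fintype.ofFinite _
  rw [Nat.card_eq_fintype_card, @Module.card_eq_pow_finrank (ZMod 2), ZMod.card]
  rfl

lemma nullity_eq_of_equiv {ι κ : Type*} [Fintype ι] [Fintype κ]
    (M : Matrix ι ι (ZMod 2)) (N : Matrix κ κ (ZMod 2))
    (e : {x : ι → ZMod 2 // M.mulVec x = 0} ≃ {y : κ → ZMod 2 // N.mulVec y = 0}) :
    nullity M = nullity N := by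
  have := card_ker_aux ι M
  rw [Nat.card_congr e, card_ker_aux] at this
  exact (Nat.pow_right_injective (le_refl 2) this.symm)

lemma nullity_reindex {ι κ : Type*} [Fintype ι] [Fintype κ]
    (M : Matrix ι ι (ZMod 2)) (e : κ ≃ ι) (N : Matrix κ κ (ZMod 2))
    (hN : ∀ i j, N i j = M (e i) (e j)) : nullity N = nullity M := by
  apply nullity_eq_of_equiv
  refine ⟨fun x => ⟨x.1 ∘ e.symm, ?_⟩, fun y => ⟨y.1 ∘ e, ?_⟩, ?_, ?_⟩
  · obtain ⟨x, hx⟩ := x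
    funext i
    have : (M.mulVec (x ∘ e.symm)) i = (N.mulVec x) (e.symm i) := by
      simp only [Matrix.mulVec, dotProduct, Function.comp]
      rw [← Equiv.sum_comp e (fun j => M i j * x (e.symm j))]
      simp [hN]
    rw [this, hx]; rfl
  · obtain ⟨y, hy⟩ := y
    funext k
    have : (N.mulVec (y ∘ e)) k = (M.mulVec y) (e k) := by
      simp only [Matrix.mulVec, dotProduct, Function.comp]
      rw [← Equiv.sum_comp e (fun j => M (e k) j * y j)]
      simp [hN]
    rw [this, hy]; rfl
  · intro x; ext i; simp
  · intro y; ext k; simp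

lemma sum_split_aux {ι : Type*} [Fintype ι] [DecidableEq ι] (v : ι) (f : ι → ZMod 2) :
    ∑ j, f j = f v + ∑ j : {x : ι // x ≠ v}, f j.1 := by
  rw [Fintype.sum_eq_add_sum_compl v]
  congr 1
  exact (Finset.sum_subtype _ (fun x => by simp) f)

lemma nullity_pivot {ι : Type*} [Fintype ι] [DecidableEq ι]
    (M : Matrix ι ι (ZMod 2)) (v : ι) (hv : M v v = 1)
    (N : Matrix {x : ι // x ≠ v} {x : ι // x ≠ v} (ZMod 2))
    (hN : ∀ x y, N x y = M x.1 y.1 + M x.1 v * M v y.1) :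
    nullity M = nullity N := by
  have char2 : ∀ a : ZMod 2, a + a = 0 := by decide
  have flip : ∀ a b : ZMod 2, a + b = 0 → b = a := by decide
  apply nullity_eq_of_equiv
  have mv : ∀ (x : ι → ZMod 2) (i : ι),
      M.mulVec x i = M i v * x v + ∑ j : {a : ι // a ≠ v}, M i j.1 * x j.1 := by
    intro x i
    simp only [Matrix.mulVec, dotProduct]
    exact sum_split_aux v (fun j => M i j * x j)
  have nv : ∀ (u : {a : ι // a ≠ v} → ZMod 2) (k : {a : ι // a ≠ v}),
      N.mulVec u k = (∑ j : {a : ι // a ≠ v}, M k.1 j.1 * u j)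
        + M k.1 v * ∑ j : {a : ι // a ≠ v}, M v j.1 * u j := by
    intro u k
    simp only [Matrix.mulVec, dotProduct, hN, add_mul, Finset.sum_add_distrib,
      Finset.mul_sum, mul_assoc]
  refine ⟨fun x => ⟨fun k => x.1 k.1, ?_⟩,
          fun u => ⟨fun i => if h : i = v then ∑ j : {a : ι // a ≠ v}, M v j.1 * u.1 j
                    else u.1 ⟨i, h⟩, ?_⟩, ?_, ?_⟩
  · obtain ⟨x, hx⟩ := x
    have h0 : ∀ i, M i v * x v + ∑ j : {a : ι // a ≠ v}, M i j.1 * x j.1 = 0 := by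
      intro i; rw [← mv, hx]; rfl
    have hSv : ∑ j : {a : ι // a ≠ v}, M v j.1 * x j.1 = x v := by
      have h := h0 v; rw [hv, one_mul] at h; exact flip _ _ h
    funext k
    show N.mulVec _ k = (0 : ZMod 2)
    rw [nv, hSv, flip _ _ (h0 k.1), char2]
  · obtain ⟨u, hu⟩ := u
    set S : ZMod 2 := ∑ j : {a : ι // a ≠ v}, M v j.1 * u j with hS
    funext i
    show M.mulVec (fun i => if h : i = v then S else u ⟨i, h⟩) i = (0 : ZMod 2)
    rw [mv]
    have e1 : (if h : v = v then S else u ⟨v, h⟩) = S := dif_pos rfl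
    have e2 : ∀ j : {a : ι // a ≠ v}, (if h : (j.1 : ι) = v then S else u ⟨j.1, h⟩) = u j :=
      fun j => by rw [dif_neg j.2]
    rw [e1, Finset.sum_congr rfl (fun j _ => by rw [e2 j])]
    by_cases hi : i = v
    · rw [hi, hv, one_mul, ← hS]
      exact char2 S
    · have hNk : N.mulVec u ⟨i, hi⟩ = 0 := by rw [hu]; rfl
      rw [nv, ← hS] at hNk
      rw [add_comm]
      exact hNk
  · intro x
    obtain ⟨x, hx⟩ := x
    ext i
    by_cases hi : i = v
    · rw [hi]
      simp only [dif_pos rfl]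
      have h0 : M v v * x v + ∑ j : {a : ι // a ≠ v}, M v j.1 * x j.1 = 0 := by
        rw [← mv, hx]; rfl
      rw [hv, one_mul] at h0
      exact flip _ _ h0
    · simp [hi]
  · intro u
    ext k
    simp [k.2]

lemma nullity_subMat_congr (G₁ G₂ : MarkedGraph V) (T₁ T₂ : Finset V)
    (hm : G₁.marked = G₂.marked) (hM : G₁.adj + delta T₁ = G₂.adj + delta T₂) :
    nullity (G₁.subMat T₁) = nullity (G₂.subMat T₂) := by
  have hkeep : ∀ w, w ∈ G₂.keep T₂ ↔ w ∈ G₁.keep T₁ := by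
    intro w
    simp only [keep, Finset.mem_filter, Finset.mem_univ, true_and, hm, hM]
  refine nullity_reindex (G₂.subMat T₂) (Equiv.subtypeEquivRight hkeep).symm
    (G₁.subMat T₁) (fun i j => ?_)
  show (G₁.adj + delta T₁) i.1 j.1 = (G₂.adj + delta T₂) _ _
  rw [hM]
  rfl

/-- toggle membership of `v` -/
def tog (v : V) (T : Finset V) : Finset V := if v ∈ T then T.erase v else insert v T

lemma tog_invol (v : V) (T : Finset V) : tog v (tog v T) = T := by
  by_cases h : v ∈ T
  · have h1 : tog v T = T.erase v := if_pos h
    rw [h1, tog, if_neg (Finset.notMem_erase v T)]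
    exact Finset.insert_erase h
  · have h1 : tog v T = insert v T := if_neg h
    rw [h1, tog, if_pos (Finset.mem_insert_self v T)]
    exact Finset.erase_insert h

def togEquiv (v : V) : Finset V ≃ Finset V :=
  ⟨tog v, tog v, tog_invol v, tog_invol v⟩

lemma mem_tog (v : V) (T : Finset V) (x : V) (hx : x ≠ v) : x ∈ tog v T ↔ x ∈ T := by
  by_cases h : v ∈ T
  · rw [tog, if_pos h, Finset.mem_erase]; simp [hx]
  · rw [tog, if_neg h, Finset.mem_insert]; simp [hx]

lemma v_mem_tog (v : V) (T : Finset V) : v ∈ tog v T ↔ v ∉ T := by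
  by_cases h : v ∈ T
  · rw [tog, if_pos h]; simp [h, Finset.notMem_erase]
  · rw [tog, if_neg h]; simp [h]

lemma removeLoop_matrix (G : MarkedGraph V) (v : V) (hlooped : G.adj v v = 1)
    (T : Finset V) : (G.removeLoop v).adj + delta (tog v T) = G.adj + delta T := by
  funext x y
  simp only [Matrix.add_apply]; simp only [removeLoop, delta, Matrix.diagonal]
  by_cases hxy : x = y
  · subst hxy
    by_cases hxv : x = v
    · subst hxv
      simp only [Matrix.of_apply, if_pos rfl, and_self, hlooped]
      by_cases h : x ∈ T
      · rw [if_pos h, if_neg ((v_mem_tog x T).not.mpr (by simp [h]))]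
        decide
      · rw [if_neg h, if_pos ((v_mem_tog x T).mpr h)]
        decide
    · simp only [Matrix.of_apply, if_pos rfl]
      rw [if_neg (by simp [hxv] : ¬(x = v ∧ x = v))]
      simp [mem_tog v T x hxv]
  · simp only [Matrix.of_apply, if_neg hxy, add_zero]
    by_cases h : x = v ∧ y = v
    · exact absurd (h.1.trans h.2.symm) hxy
    · rw [if_neg h]

lemma card_compl_singleton (v : V) :
    Fintype.card {x : V // x ∉ ({v} : Finset V)} = Fintype.card V - 1 := by
  rw [Fintype.card_subtype]
  have : Finset.univ.filter (fun x => x ∉ ({v} : Finset V)) = Finset.univ.erase v := by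
    ext x
    simp [Finset.mem_erase, and_comm]
  rw [this, Finset.card_erase_of_mem (Finset.mem_univ v), Finset.card_univ]

lemma step_pivot (G : MarkedGraph V) (v : V) (hsym : G.adj.IsSymm)
    (hlooped : G.adj v v = 1) (hnbr : ∀ x, G.nbr v x → G.marked x = false)
    (S : Finset {x : V // x ∉ ({v} : Finset V)}) :
    nullity (G.subMat (S.map (Function.Embedding.subtype _)))
      = nullity (((G.localComp v).delete {v}).subMat S) := by
  classical
  set T : Finset V := S.map (Function.Embedding.subtype _) with hT
  have hvT : v ∉ T := by
    simp only [hT, Finset.mem_map, Function.Embedding.coe_subtype]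
    rintro ⟨a, _, ha⟩
    exact a.2 (by simp [ha])
  have hmem : ∀ x : {x : V // x ∉ ({v} : Finset V)}, (x.1 ∈ T ↔ x ∈ S) := by
    intro x
    simp only [hT, Finset.mem_map, Function.Embedding.coe_subtype]
    constructor
    · rintro ⟨a, ha, h⟩
      rwa [show a = x from Subtype.ext h] at ha
    · intro h; exact ⟨x, h, rfl⟩
  have hdT : (G.adj + delta T) v v = 1 := by
    simp [Matrix.add_apply, delta, Matrix.diagonal_apply_eq, hvT, hlooped]
  have hvK : v ∈ G.keep T := by
    simp only [keep, Finset.mem_filter, Finset.mem_univ, true_and, hdT]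
    intro h
    exact one_ne_zero h.2
  set vK : ↥(G.keep T) := ⟨v, hvK⟩ with hvKdef
  have hnonbr : ∀ x : V, G.marked x = true → ¬ G.nbr v x := by
    intro x hmk hn
    rw [hnbr x hn] at hmk
    exact Bool.false_ne_true hmk
  have hkeepH : ∀ x : {x : V // x ∉ ({v} : Finset V)},
      x ∈ ((G.localComp v).delete {v}).keep S ↔ x.1 ∈ G.keep T := by
    intro x
    simp only [keep, Finset.mem_filter, Finset.mem_univ, true_and]
    have hmarked : ((G.localComp v).delete {v}).marked x = G.marked x.1 := rfl
    rw [hmarked]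
    by_cases hmk : G.marked x.1 = true
    · have hdiag : (((G.localComp v).delete {v}).adj + delta S) x x
          = (G.adj + delta T) x.1 x.1 := by
        simp only [Matrix.add_apply]; simp only [delete, localComp]
        have : ¬ (G.nbr v x.1 ∧ G.nbr v x.1) := by
          simp only [and_self]; exact hnonbr x.1 hmk
        rw [if_neg this]
        congr 1
        simp only [delta, Matrix.diagonal_apply_eq, hmem x]
      rw [hdiag]
    · simp [hmk]
  have hM : G.subMat T vK vK = 1 := hdT
  set N : Matrix {x : ↥(G.keep T) // x ≠ vK} {x : ↥(G.keep T) // x ≠ vK} (ZMod 2) :=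
    fun x y => G.subMat T x.1 y.1 + G.subMat T x.1 vK * G.subMat T vK y.1 with hN
  rw [nullity_pivot (G.subMat T) vK hM N (fun _ _ => rfl)]
  have zmod01 : ∀ z : ZMod 2, z ≠ 1 → z = 0 := by decide
  refine Eq.symm (nullity_reindex N ?e (((G.localComp v).delete {v}).subMat S) ?hent)
  case e =>
    exact ⟨fun y => ⟨⟨y.1.1, (hkeepH y.1).mp y.2⟩,
              fun h => y.1.2 (Finset.mem_singleton.mpr (congrArg Subtype.val h))⟩,
           fun x => ⟨⟨x.1.1, fun hm1 => x.2 (Subtype.ext (Finset.mem_singleton.mp hm1))⟩,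
              (hkeepH ⟨x.1.1, _⟩).mpr x.1.2⟩,
           fun y => rfl, fun x => rfl⟩
  case hent =>
    intro i j
    set a : V := i.1.1 with ha
    set b : V := j.1.1 with hb
    have hav : a ≠ v := fun h => i.1.2 (Finset.mem_singleton.mpr h)
    have hbv : b ≠ v := fun h => j.1.2 (Finset.mem_singleton.mpr h)
    show (((G.localComp v).delete {v}).adj + delta S) i.1 j.1
      = (G.adj + delta T) a b + (G.adj + delta T) a v * (G.adj + delta T) v b
    have e1 : (G.adj + delta T) a v = G.adj a v := by
      simp [Matrix.add_apply, delta, Matrix.diagonal_apply_ne _ hav]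
    have e2 : (G.adj + delta T) v b = G.adj v b := by
      simp [Matrix.add_apply, delta, Matrix.diagonal_apply_ne _ (Ne.symm hbv)]
    have e3 : delta S i.1 j.1 = delta T a b := by
      by_cases hab : a = b
      · have hij : i.1 = j.1 := Subtype.ext hab
        simp only [delta, Matrix.diagonal, Matrix.of_apply, if_pos hij, if_pos hab]
        simp only [← hmem i.1]; rfl
      · have hij : i.1 ≠ j.1 := fun h => hab (congrArg Subtype.val h)
        simp only [delta, Matrix.diagonal, Matrix.of_apply, if_neg hij, if_neg hab]
    simp only [Matrix.add_apply, e1, e2, e3]; simp only [delete, localComp]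
    have hsym' : G.adj a v = G.adj v a := by
      conv_lhs => rw [← hsym]
      rfl
    by_cases h1 : G.adj v a = 1
    · by_cases h2 : G.adj v b = 1
      · rw [if_pos ⟨⟨hav, h1⟩, ⟨hbv, h2⟩⟩, hsym', h1, h2]
        ring
      · rw [if_neg (fun h => h2 h.2.2), zmod01 _ h2, mul_zero, add_zero]
    · rw [if_neg (fun h => h1 h.1.2), hsym', zmod01 _ h1, zero_mul, add_zero]

end MarkedGraph

/-- If `v` is a looped vertex with no marked neighbor then
`A⬝[G] = B⬝[G - {v,v}] + (A² - B²)⬝[G^v - v]`. -/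
theorem bracket_looped {V : Type} [Fintype V] [DecidableEq V]
    (G : MarkedGraph V) (hsym : G.adj.IsSymm) (v : V)
    (hlooped : G.adj v v = 1)
    (hnbr : ∀ x, G.nbr v x → G.marked x = false) :
    X 0 * G.bracket =
      X 1 * (G.removeLoop v).bracket +
        (X 0 ^ 2 - X 1 ^ 2) * ((G.localComp v).delete {v}).bracket := by
  classical
  have hcV' := MarkedGraph.card_compl_singleton v
  have key : (X 0 : MvPolynomial (Fin 3) ℤ) *
      (∑ T : Finset V, X 0 ^ (Fintype.card V - T.card) * X 1 ^ T.card *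
        X 2 ^ MarkedGraph.nullity (G.subMat T)) =
      X 1 * (∑ T : Finset V, X 0 ^ (Fintype.card V - T.card) * X 1 ^ T.card *
        X 2 ^ MarkedGraph.nullity ((G.removeLoop v).subMat T)) +
      (X 0 ^ 2 - X 1 ^ 2) * (∑ S : Finset {x : V // x ∉ ({v} : Finset V)},
        X 0 ^ (Fintype.card {x : V // x ∉ ({v} : Finset V)} - S.card) * X 1 ^ S.card *
        X 2 ^ MarkedGraph.nullity (((G.localComp v).delete {v}).subMat S)) := by
    have hrl : (∑ T : Finset V, X 0 ^ (Fintype.card V - T.card) * X 1 ^ T.card *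
          X 2 ^ MarkedGraph.nullity ((G.removeLoop v).subMat T))
        = ∑ T : Finset V, X 0 ^ (Fintype.card V - (MarkedGraph.tog v T).card) *
            X 1 ^ (MarkedGraph.tog v T).card *
            (X 2 : MvPolynomial (Fin 3) ℤ) ^ MarkedGraph.nullity (G.subMat T) := by
      refine (Fintype.sum_equiv (MarkedGraph.togEquiv v) _ _ ?_).symm
      intro T
      have htE : (MarkedGraph.togEquiv v) T = MarkedGraph.tog v T := rfl
      rw [htE, MarkedGraph.nullity_subMat_congr (G.removeLoop v) G (MarkedGraph.tog v T) T rfl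
        (MarkedGraph.removeLoop_matrix G v hlooped T)]
    have hH : (∑ S : Finset {x : V // x ∉ ({v} : Finset V)},
          X 0 ^ (Fintype.card {x : V // x ∉ ({v} : Finset V)} - S.card) * X 1 ^ S.card *
          X 2 ^ MarkedGraph.nullity (((G.localComp v).delete {v}).subMat S))
        = ∑ T ∈ Finset.univ.filter (fun T : Finset V => v ∉ T),
            X 0 ^ (Fintype.card V - 1 - T.card) * X 1 ^ T.card *
            (X 2 : MvPolynomial (Fin 3) ℤ) ^ MarkedGraph.nullity (G.subMat T) := by
      refine Finset.sum_nbij'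
        (fun S => S.map (Function.Embedding.subtype (fun x : V => x ∉ ({v} : Finset V))))
        (fun T => T.subtype (fun x : V => x ∉ ({v} : Finset V))) ?_ ?_ ?_ ?_ ?_
      · intro S _
        simp only [Finset.mem_filter, Finset.mem_univ, true_and, Finset.mem_map,
          Function.Embedding.coe_subtype]
        rintro ⟨a, _, ha⟩
        exact a.2 (by simp [ha])
      · intro T _
        exact Finset.mem_univ _
      · intro S _
        ext x
        simp [Finset.mem_subtype, Finset.mem_map, Function.Embedding.coe_subtype,
          Subtype.coe_inj]
      · intro T hT
        show (T.subtype (fun x : V => x ∉ ({v} : Finset V))).map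
          (Function.Embedding.subtype _) = T
        rw [Finset.subtype_map]
        apply Finset.filter_true_of_mem
        intro x hx
        simp only [Finset.mem_singleton]
        rintro rfl
        exact (Finset.mem_filter.mp hT).2 hx
      · intro S _
        rw [hcV', Finset.card_map,
          ← MarkedGraph.step_pivot G v hsym hlooped hnbr S]
    rw [hrl, hH, Finset.sum_filter, Finset.mul_sum, Finset.mul_sum, Finset.mul_sum,
      ← Finset.sum_add_distrib]
    refine Finset.sum_congr rfl (fun T _ => ?_)
    have hc : T.card ≤ Fintype.card V := by
      simpa using Finset.card_le_univ T
    by_cases hv' : v ∈ T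
    · rw [if_neg (not_not_intro hv'), mul_zero, add_zero]
      have htog : (MarkedGraph.tog v T).card = T.card - 1 := by
        rw [MarkedGraph.tog, if_pos hv']
        exact Finset.card_erase_of_mem hv'
      obtain ⟨k, hk⟩ : ∃ k, T.card = k + 1 :=
        ⟨T.card - 1, (Nat.succ_pred_eq_of_pos (Finset.card_pos.mpr ⟨v, hv'⟩)).symm⟩
      rw [htog, hk]
      simp only [Nat.add_sub_cancel]
      have e1 : Fintype.card V - k = (Fintype.card V - (k + 1)) + 1 := by omega
      rw [e1]
      ring
    · rw [if_pos hv']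
      have htog : (MarkedGraph.tog v T).card = T.card + 1 := by
        rw [MarkedGraph.tog, if_neg hv']
        exact Finset.card_insert_of_notMem hv'
      have hlt : T.card < Fintype.card V := by
        have hne : T ≠ Finset.univ := fun h => hv' (h ▸ Finset.mem_univ v)
        have := Finset.card_lt_card (Finset.ssubset_univ_iff.mpr hne)
        rwa [Finset.card_univ] at this
      have e1 : Fintype.card V - T.card = (Fintype.card V - (T.card + 1)) + 1 := by omega
      have e2 : Fintype.card V - 1 - T.card = Fintype.card V - (T.card + 1) := by omega
      rw [htog, e1, e2]
      ring
  rw [MarkedGraph.bracket, MarkedGraph.bracket, MarkedGraph.bracket]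
  have h1 : (G.removeLoop v).freeLoops = G.freeLoops := rfl
  have h2 : ((G.localComp v).delete ({v} : Finset V)).freeLoops = G.freeLoops := rfl
  rw [h1, h2]
  linear_combination (X 2 : MvPolynomial (Fin 3) ℤ) ^ G.freeLoops * key
end

section
/- Suppose v is a looped marked vertex of the marked graph G and no neighbor of v is marked. Then [G] = [G^v − {v,v}], the bracket polynomial of the marked graph obtained from the local complement G^v by removing the loop at v (the vertex v is retained). -/
open MvPolynomial

namespace MarkedGraph

private lemma zmod2_add_self (a : ZMod 2) : a + a = 0 := by revert a; decide
private lemma zmod2_eq_zero (a : ZMod 2) (h : ¬ a = 1) : a = 0 := by revert a h; decide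
private lemma zmod2_cancel (a b : ZMod 2) (h : a + b = 0) : b = a := by revert a b; decide
private lemma zmod2_alg1 (a d m : ZMod 2) : a + d = a + m + d + m := by revert a d m; decide

private lemma sum_split {ι : Type*} [Fintype ι] [DecidableEq ι] (f : ι → ZMod 2) (p : ι) :
    ∑ i, f i = f p + ∑ i : {i : ι // i ≠ p}, f i := by
  classical
  have h1 : ∑ i : {i : ι // i ≠ p}, f i.1 = ∑ i ∈ Finset.univ.erase p, f i :=
    (Finset.sum_subtype (Finset.univ.erase p) (fun x => by simp) f).symm
  rw [h1, Finset.add_sum_erase _ f (Finset.mem_univ p)]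

private lemma mem_ker_iff {ι : Type*} [Fintype ι] (M : Matrix ι ι (ZMod 2)) (x : ι → ZMod 2) :
    x ∈ LinearMap.ker M.mulVecLin ↔ ∀ i, ∑ j, M i j * x j = 0 := by
  rw [LinearMap.mem_ker]
  constructor
  · intro h i
    have := congrFun h i
    simpa [Matrix.mulVecLin_apply, Matrix.mulVec, dotProduct] using this
  · intro h
    ext i
    simpa [Matrix.mulVecLin_apply, Matrix.mulVec, dotProduct] using h i

private lemma nullity_eq_card_sub_rank {ι : Type*} [Fintype ι] (M : Matrix ι ι (ZMod 2)) :
    nullity M = Fintype.card ι - M.rank := by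
  have h := LinearMap.finrank_range_add_finrank_ker M.mulVecLin
  rw [Module.finrank_fintype_fun_eq_card] at h
  have hr : M.rank = Module.finrank (ZMod 2) (LinearMap.range M.mulVecLin) := rfl
  unfold MarkedGraph.nullity
  rw [hr]
  omega

private lemma nullity_submatrix {ι κ : Type*} [Fintype ι] [Fintype κ]
    (M : Matrix ι ι (ZMod 2)) (e : κ ≃ ι) :
    nullity (M.submatrix e e) = nullity M := by
  rw [nullity_eq_card_sub_rank, nullity_eq_card_sub_rank, Matrix.rank_submatrix,
    Fintype.card_congr e]

private def extFun {ι : Type*} [Fintype ι] [DecidableEq ι]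
    (M : Matrix ι ι (ZMod 2)) (p : ι) (y : {i : ι // i ≠ p} → ZMod 2) : ι → ZMod 2 :=
  fun i => if h : i = p then ∑ j : {i : ι // i ≠ p}, M p j.1 * y j else y ⟨i, h⟩

private lemma extFun_ne {ι : Type*} [Fintype ι] [DecidableEq ι]
    (M : Matrix ι ι (ZMod 2)) (p : ι) (y : {i : ι // i ≠ p} → ZMod 2)
    (j : {i : ι // i ≠ p}) : extFun M p y j.1 = y j :=
  dif_neg j.2

private lemma extFun_p {ι : Type*} [Fintype ι] [DecidableEq ι]
    (M : Matrix ι ι (ZMod 2)) (p : ι) (y : {i : ι // i ≠ p} → ZMod 2) :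
    extFun M p y p = ∑ j : {i : ι // i ≠ p}, M p j.1 * y j :=
  dif_pos rfl

private lemma nullity_schur {ι : Type*} [Fintype ι] [DecidableEq ι]
    (M : Matrix ι ι (ZMod 2)) (hs : ∀ i j, M i j = M j i) (p : ι) (hp : M p p = 1) :
    nullity M =
      nullity (Matrix.of fun i j : {i : ι // i ≠ p} => M i.1 j.1 + M p i.1 * M p j.1) := by
  set N : Matrix {i : ι // i ≠ p} {i : ι // i ≠ p} (ZMod 2) :=
    Matrix.of (fun i j : {i : ι // i ≠ p} => M i.1 j.1 + M p i.1 * M p j.1) with hNdef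
  have hrow : ∀ (x : ι → ZMod 2), x ∈ LinearMap.ker M.mulVecLin →
      ∀ k, ∑ j : {i : ι // i ≠ p}, M k j.1 * x j.1 = M k p * x p := by
    intro x hx k
    have h0 := (mem_ker_iff M x).mp hx k
    rw [sum_split (fun j => M k j * x j) p] at h0
    exact zmod2_cancel _ _ h0
  have fwd : ∀ (x : ι → ZMod 2), x ∈ LinearMap.ker M.mulVecLin →
      (fun i : {i : ι // i ≠ p} => x i.1) ∈ LinearMap.ker N.mulVecLin := by
    intro x hx
    rw [mem_ker_iff]
    intro i
    show ∑ j : {i : ι // i ≠ p}, N i j * x j.1 = 0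
    have e1 : ∑ j : {i : ι // i ≠ p}, N i j * x j.1
        = (∑ j : {i : ι // i ≠ p}, M i.1 j.1 * x j.1)
          + M p i.1 * ∑ j : {i : ι // i ≠ p}, M p j.1 * x j.1 := by
      rw [Finset.mul_sum, ← Finset.sum_add_distrib]
      refine Finset.sum_congr rfl fun j _ => ?_
      show (M i.1 j.1 + M p i.1 * M p j.1) * x j.1 = _
      ring
    rw [e1, hrow x hx i.1, hrow x hx p, hp, hs p i.1, one_mul]
    exact zmod2_add_self _
  have bwd : ∀ (y : {i : ι // i ≠ p} → ZMod 2), y ∈ LinearMap.ker N.mulVecLin →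
      extFun M p y ∈ LinearMap.ker M.mulVecLin := by
    intro y hy
    have hNy := (mem_ker_iff N y).mp hy
    rw [mem_ker_iff]
    intro i
    rw [sum_split (fun j => M i j * extFun M p y j) p]
    have e2 : ∑ j : {i : ι // i ≠ p}, M i j.1 * extFun M p y j.1
        = ∑ j : {i : ι // i ≠ p}, M i j.1 * y j :=
      Finset.sum_congr rfl fun j _ => by rw [extFun_ne]
    show M i p * extFun M p y p + ∑ j : {i : ι // i ≠ p}, M i j.1 * extFun M p y j.1 = 0
    rw [extFun_p, e2]
    by_cases hi : i = p
    · rw [hi, hp, one_mul]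
      exact zmod2_add_self _
    · have h3 := hNy ⟨i, hi⟩
      have e3 : ∑ j : {i : ι // i ≠ p}, N ⟨i, hi⟩ j * y j
          = (∑ j : {i : ι // i ≠ p}, M i j.1 * y j)
            + M p i * ∑ j : {i : ι // i ≠ p}, M p j.1 * y j := by
        rw [Finset.mul_sum, ← Finset.sum_add_distrib]
        refine Finset.sum_congr rfl fun j _ => ?_
        show (M i j.1 + M p i * M p j.1) * y j = _
        ring
      rw [e3] at h3
      rw [hs i p, add_comm]
      exact h3
  have linv : ∀ (x : ι → ZMod 2), x ∈ LinearMap.ker M.mulVecLin →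
      extFun M p (fun i : {i : ι // i ≠ p} => x i.1) = x := by
    intro x hx
    funext i
    by_cases hi : i = p
    · rw [hi, extFun_p, hrow x hx p, hp, one_mul]
    · exact extFun_ne M p _ ⟨i, hi⟩
  have rinv : ∀ (y : {i : ι // i ≠ p} → ZMod 2),
      (fun i : {i : ι // i ≠ p} => extFun M p y i.1) = y := by
    intro y; funext i; exact extFun_ne M p y i
  have E : (LinearMap.ker M.mulVecLin) ≃ₗ[ZMod 2] (LinearMap.ker N.mulVecLin) :=
    { toFun := fun x => ⟨fun i => x.1 i.1, fwd x.1 x.2⟩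
      map_add' := fun a b => rfl
      map_smul' := fun c a => rfl
      invFun := fun y => ⟨extFun M p y.1, bwd y.1 y.2⟩
      left_inv := fun x => Subtype.ext (linv x.1 x.2)
      right_inv := fun y => Subtype.ext (rinv y.1) }
  unfold MarkedGraph.nullity
  exact E.finrank_eq

private lemma nullity_schur' {ι κ : Type*} [Fintype ι] [DecidableEq ι] [Fintype κ]
    (M : Matrix ι ι (ZMod 2)) (hs : ∀ i j, M i j = M j i) (p : ι) (hp : M p p = 1)
    (N : Matrix κ κ (ZMod 2)) (e : κ ≃ {i : ι // i ≠ p})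
    (hN : ∀ i j, N i j = M (e i).1 (e j).1 + M p (e i).1 * M p (e j).1) :
    nullity M = nullity N := by
  rw [nullity_schur M hs p hp]
  have hEq : N = (Matrix.of fun i j : {i : ι // i ≠ p} =>
      M i.1 j.1 + M p i.1 * M p j.1).submatrix e e := by
    ext i j
    rw [Matrix.submatrix_apply]
    exact hN i j
  rw [hEq, nullity_submatrix]

variable {V : Type} [Fintype V] [DecidableEq V]

private lemma delta_apply_ne {T : Finset V} {x y : V} (h : x ≠ y) : delta T x y = 0 :=
  Matrix.diagonal_apply_ne _ h

private lemma delta_apply_eq (T : Finset V) (x : V) : delta T x x = if x ∈ T then 1 else 0 :=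
  Matrix.diagonal_apply_eq _ x

private lemma addDelta_symm {A : Matrix V V (ZMod 2)} (hpt : ∀ x y, A x y = A y x)
    (T : Finset V) (x y : V) : (A + delta T) x y = (A + delta T) y x := by
  rcases eq_or_ne x y with rfl | h
  · rfl
  · rw [Matrix.add_apply, Matrix.add_apply, delta_apply_ne h, delta_apply_ne h.symm, hpt x y]

private lemma mem_keep_iff (G : MarkedGraph V) (T : Finset V) (x : V) :
    x ∈ G.keep T ↔ ¬ (G.marked x = true ∧ (G.adj + delta T) x x = 0) := by
  simp [keep]

private lemma key_nullity (G : MarkedGraph V) (hsym : G.adj.IsSymm) (v : V)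
    (hlooped : G.adj v v = 1) (hmarked : G.marked v = true)
    (hnbr : ∀ x, G.nbr v x → G.marked x = false) (T : Finset V) :
    nullity (G.subMat T) = nullity (((G.localComp v).removeLoop v).subMat T) := by
  set G' := (G.localComp v).removeLoop v with hG'
  have hA'row : ∀ x, x ≠ v → G'.adj v x = G.adj v x := by
    intro x hx
    show (if v = v ∧ x = v then 0 else
      if G.nbr v v ∧ G.nbr v x then G.adj v x + 1 else G.adj v x) = G.adj v x
    rw [if_neg (fun h => hx h.2), if_neg (fun h => h.1.1 rfl)]
  have hA'col : ∀ x, x ≠ v → G'.adj x v = G.adj x v := by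
    intro x hx
    show (if x = v ∧ v = v then 0 else
      if G.nbr v x ∧ G.nbr v v then G.adj x v + 1 else G.adj x v) = G.adj x v
    rw [if_neg (fun h => hx h.1), if_neg (fun h => h.2.1 rfl)]
  have hA'vv : G'.adj v v = 0 := by
    show (if v = v ∧ v = v then 0 else _) = 0
    rw [if_pos ⟨rfl, rfl⟩]
  have hA' : ∀ x y, x ≠ v → y ≠ v → G'.adj x y = G.adj x y + G.adj v x * G.adj v y := by
    intro x y hx hy
    show (if x = v ∧ y = v then 0 else
      if G.nbr v x ∧ G.nbr v y then G.adj x y + 1 else G.adj x y) = _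
    rw [if_neg (fun h => hx h.1)]
    by_cases hnx : G.nbr v x
    · by_cases hny : G.nbr v y
      · rw [if_pos ⟨hnx, hny⟩, hnx.2, hny.2, mul_one]
      · rw [if_neg (fun h => hny h.2)]
        rw [zmod2_eq_zero (G.adj v y) (fun h1 => hny ⟨hy, h1⟩), mul_zero, add_zero]
    · rw [if_neg (fun h => hnx h.1)]
      rw [zmod2_eq_zero (G.adj v x) (fun h1 => hnx ⟨hx, h1⟩), zero_mul, add_zero]
  have hAv0 : ∀ x, G.marked x = true → x ≠ v → G.adj v x = 0 := by
    intro x hm hx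
    refine zmod2_eq_zero _ fun h1 => ?_
    have := hnbr x ⟨hx, h1⟩
    rw [hm] at this
    exact Bool.noConfusion this
  have hmarked' : ∀ x, G'.marked x = G.marked x := fun x => rfl
  have hsym' : ∀ x y, G'.adj x y = G'.adj y x := by
    intro x y
    by_cases hx : x = v
    · rw [hx]
      by_cases hy : y = v
      · rw [hy]
      · rw [hA'row y hy, hA'col y hy, hsym.apply y v]
    · by_cases hy : y = v
      · rw [hy, hA'row x hx, hA'col x hx, hsym.apply v x]
      · rw [hA' x y hx hy, hA' y x hy hx, hsym.apply y x, mul_comm]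
  have hkeepx : ∀ x, x ≠ v → (x ∈ G'.keep T ↔ x ∈ G.keep T) := by
    intro x hx
    rw [mem_keep_iff, mem_keep_iff, hmarked' x]
    cases hmx : G.marked x with
    | false => simp [hmx]
    | true =>
      have hd : (G'.adj + delta T) x x = (G.adj + delta T) x x := by
        rw [Matrix.add_apply, Matrix.add_apply, hA' x x hx hx, hAv0 x hmx hx, mul_zero,
          add_zero]
      rw [hd]
  by_cases hvT : v ∈ T
  · -- v is kept in G' (diag 1), deleted in G (diag 0)
    have hp'mem : v ∈ G'.keep T := by
      rw [mem_keep_iff]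
      rintro ⟨-, h2⟩
      rw [Matrix.add_apply, hA'vv, delta_apply_eq, if_pos hvT] at h2
      exact absurd h2 (by decide)
    have hpnot : v ∉ G.keep T := by
      rw [mem_keep_iff, not_not]
      refine ⟨hmarked, ?_⟩
      rw [Matrix.add_apply, hlooped, delta_apply_eq, if_pos hvT]
      decide
    have hmem : ∀ x, x ∈ G.keep T ↔ x ∈ G'.keep T ∧ x ≠ v := by
      intro x
      by_cases hx : x = v
      · rw [hx]
        simp [hpnot]
      · rw [hkeepx x hx]
        simp [hx]
    have hsM' : ∀ i j : {x // x ∈ G'.keep T}, G'.subMat T i j = G'.subMat T j i :=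
      fun i j => addDelta_symm hsym' T i.1 j.1
    have hp1 : G'.subMat T ⟨v, hp'mem⟩ ⟨v, hp'mem⟩ = 1 := by
      show (G'.adj + delta T) v v = 1
      rw [Matrix.add_apply, hA'vv, delta_apply_eq, if_pos hvT]
      decide
    let p : {x // x ∈ G'.keep T} := ⟨v, hp'mem⟩
    let e : {x // x ∈ G.keep T} ≃ {i : {x // x ∈ G'.keep T} // i ≠ p} :=
      { toFun := fun k => ⟨⟨k.1, ((hmem k.1).mp k.2).1⟩,
          fun h => ((hmem k.1).mp k.2).2 (congrArg Subtype.val h)⟩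
        invFun := fun i => ⟨i.1.1, (hmem i.1.1).mpr ⟨i.1.2, fun h => i.2 (Subtype.ext h)⟩⟩
        left_inv := fun _ => rfl
        right_inv := fun _ => rfl }
    refine (nullity_schur' (G'.subMat T) hsM' p hp1 (G.subMat T) e ?_).symm
    intro i j
    have hxi : i.1 ≠ v := ((hmem i.1).mp i.2).2
    have hxj : j.1 ≠ v := ((hmem j.1).mp j.2).2
    show (G.adj + delta T) i.1 j.1 =
      (G'.adj + delta T) i.1 j.1 + (G'.adj + delta T) v i.1 * (G'.adj + delta T) v j.1
    simp only [Matrix.add_apply]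
    rw [delta_apply_ne (Ne.symm hxi), delta_apply_ne (Ne.symm hxj), hA'row _ hxi,
      hA'row _ hxj, hA' _ _ hxi hxj, add_zero, add_zero]
    exact zmod2_alg1 _ _ _
  · -- v is kept in G (diag 1), deleted in G' (diag 0)
    have hpmem : v ∈ G.keep T := by
      rw [mem_keep_iff]
      rintro ⟨-, h2⟩
      rw [Matrix.add_apply, hlooped, delta_apply_eq, if_neg hvT] at h2
      exact absurd h2 (by decide)
    have hp'not : v ∉ G'.keep T := by
      rw [mem_keep_iff, not_not, hmarked' v]
      refine ⟨hmarked, ?_⟩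
      rw [Matrix.add_apply, hA'vv, delta_apply_eq, if_neg hvT]
      decide
    have hmem : ∀ x, x ∈ G'.keep T ↔ x ∈ G.keep T ∧ x ≠ v := by
      intro x
      by_cases hx : x = v
      · rw [hx]
        simp [hp'not]
      · rw [hkeepx x hx]
        simp [hx]
    have hsM : ∀ i j : {x // x ∈ G.keep T}, G.subMat T i j = G.subMat T j i :=
      fun i j => addDelta_symm (fun a b => hsym.apply b a) T i.1 j.1
    have hp1 : G.subMat T ⟨v, hpmem⟩ ⟨v, hpmem⟩ = 1 := by
      show (G.adj + delta T) v v = 1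
      rw [Matrix.add_apply, hlooped, delta_apply_eq, if_neg hvT]
      decide
    let p : {x // x ∈ G.keep T} := ⟨v, hpmem⟩
    let e : {x // x ∈ G'.keep T} ≃ {i : {x // x ∈ G.keep T} // i ≠ p} :=
      { toFun := fun k => ⟨⟨k.1, ((hmem k.1).mp k.2).1⟩,
          fun h => ((hmem k.1).mp k.2).2 (congrArg Subtype.val h)⟩
        invFun := fun i => ⟨i.1.1, (hmem i.1.1).mpr ⟨i.1.2, fun h => i.2 (Subtype.ext h)⟩⟩
        left_inv := fun _ => rfl
        right_inv := fun _ => rfl }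
    refine nullity_schur' (G.subMat T) hsM p hp1 (G'.subMat T) e ?_
    intro i j
    have hxi : i.1 ≠ v := ((hmem i.1).mp i.2).2
    have hxj : j.1 ≠ v := ((hmem j.1).mp j.2).2
    show (G'.adj + delta T) i.1 j.1 =
      (G.adj + delta T) i.1 j.1 + (G.adj + delta T) v i.1 * (G.adj + delta T) v j.1
    simp only [Matrix.add_apply]
    rw [delta_apply_ne (Ne.symm hxi), delta_apply_ne (Ne.symm hxj), hA' _ _ hxi hxj,
      add_zero, add_zero]
    ring

end MarkedGraph

/-- If `v` is a looped marked vertex with no marked neighbor then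
`[G] = [G^v - {v,v}]` (the local complement with the loop at `v` removed;
`v` is retained). -/
theorem bracket_reverse {V : Type} [Fintype V] [DecidableEq V]
    (G : MarkedGraph V) (hsym : G.adj.IsSymm) (v : V)
    (hlooped : G.adj v v = 1) (hmarked : G.marked v = true)
    (hnbr : ∀ x, G.nbr v x → G.marked x = false) :
    G.bracket = ((G.localComp v).removeLoop v).bracket := by
  unfold MarkedGraph.bracket
  rw [show ((G.localComp v).removeLoop v).freeLoops = G.freeLoops from rfl]
  congr 1
  refine Finset.sum_congr rfl fun T _ => ?_
  rw [MarkedGraph.key_nullity G hsym v hlooped hmarked hnbr T]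
end
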